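/- Let $F = t_0^2t_2 + t_0t_1t_3 + t_1^2t_4 \in \overline{\mathbb{Q}}[t_0,\ldots,t_4]$. Let $A \in \mathrm{GL}_5(\overline{\mathbb{Q}})$ act on polynomials by substitution and suppose $A(t_0) = t_0$ and $A(t_1) = t_1$. Then $F \circ A = c\cdot F$ for some $c \in \overline{\mathbb{Q}}^*$ if and only if there exist $w \in \overline{\mathbb{Q}}^*$ and $\alpha, \beta \in \overline{\mathbb{Q}}$ such that $A(t_2) = w\, t_2 - \alpha\, t_1$, $A(t_3) = w\, t_3 + \alpha\, t_0 - \beta\, t_1$, and $A(t_4) = w\, t_4 + \beta\, t_0$. Moreover the set of such triples $(w,\alpha,\beta) \in \overline{\mathbb{Q}}^* \times \overline{\mathbb{Q}} \times \overline{\mathbb{Q}}$ forms a group under the product $(w,\alpha,\beta)\cdot(w',\alpha',\beta') = (ww', w'\alpha+\alpha', w'\beta+\beta')$, and $(w,\alpha,\beta) \mapsto A$ is a group isomorphism onto the group of substitutions fixing $t_0,t_1$ and preserving $F$ up to scalar. -/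

import Mathlib

open MvPolynomial

/-- The cubic form `t₀²t₂ + t₀t₁t₃ + t₁²t₄` over the algebraic closure of `ℚ`. -/
noncomputable def cubicF : MvPolynomial (Fin 5) (AlgebraicClosure ℚ) :=
  X 0 ^ 2 * X 2 + X 0 * X 1 * X 3 + X 1 ^ 2 * X 4

/-- The action of a matrix `A` on the variables: `A(t_j) = ∑ i A_{ij} t_i`. -/
noncomputable def actVar (A : Matrix (Fin 5) (Fin 5) (AlgebraicClosure ℚ)) (j : Fin 5) :
    MvPolynomial (Fin 5) (AlgebraicClosure ℚ) :=
  ∑ i, C (A i j) * X i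

/-- The matrix of the substitution fixing `t₀, t₁` with
`t₂ ↦ w t₂ − α t₁`, `t₃ ↦ w t₃ + α t₀ − β t₁`, `t₄ ↦ w t₄ + β t₀`
(so that its `j`-th column gives the image of `t_j`). -/
noncomputable def matFor (w α β : AlgebraicClosure ℚ) : Matrix (Fin 5) (Fin 5) (AlgebraicClosure ℚ) :=
  !![1, 0, 0, α, β;
     0, 1, -α, -β, 0;
     0, 0, w, 0, 0;
     0, 0, 0, w, 0;
     0, 0, 0, 0, w]


section Aux

local notation "K" => AlgebraicClosure ℚ

private theorem actVar_eq (A : Matrix (Fin 5) (Fin 5) K) (j : Fin 5) :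
    actVar A j = C (A 0 j) * X 0 + C (A 1 j) * X 1 + C (A 2 j) * X 2
      + C (A 3 j) * X 3 + C (A 4 j) * X 4 := by
  simp [actVar, Fin.sum_univ_five]

private theorem actVar_matFor (w α β : K) :
    actVar (matFor w α β) 0 = X 0 ∧ actVar (matFor w α β) 1 = X 1 ∧
    actVar (matFor w α β) 2 = C w * X 2 - C α * X 1 ∧
    actVar (matFor w α β) 3 = C w * X 3 + C α * X 0 - C β * X 1 ∧
    actVar (matFor w α β) 4 = C w * X 4 + C β * X 0 := by
  refine ⟨?_, ?_, ?_, ?_, ?_⟩ <;>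
    · rw [actVar_eq]
      simp [matFor, Matrix.vecHead, Matrix.vecTail, map_neg]
      try ring

private theorem matFor_mul (w α β w' α' β' : K) :
    matFor w α β * matFor w' α' β' = matFor (w * w') (w' * α + α') (w' * β + β') := by
  ext i j; fin_cases i <;> fin_cases j <;>
    simp [matFor, Matrix.mul_apply, Fin.sum_univ_five, Matrix.vecHead, Matrix.vecTail] <;> ring

private theorem matFor_one : matFor 1 0 0 = (1 : Matrix (Fin 5) (Fin 5) K) := by
  ext i j; fin_cases i <;> fin_cases j <;>
    simp [matFor, Matrix.one_apply, Matrix.vecHead, Matrix.vecTail]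

private theorem bind_compute (A : Matrix (Fin 5) (Fin 5) K) (w α β : K)
    (h0 : actVar A 0 = X 0) (h1 : actVar A 1 = X 1)
    (h2 : actVar A 2 = C w * X 2 - C α * X 1)
    (h3 : actVar A 3 = C w * X 3 + C α * X 0 - C β * X 1)
    (h4 : actVar A 4 = C w * X 4 + C β * X 0) :
    bind₁ (actVar A) cubicF = C w * cubicF := by
  simp only [cubicF, map_add, map_mul, map_pow, bind₁_X_right, h0, h1, h2, h3, h4]
  ring

private theorem key (A : Matrix (Fin 5) (Fin 5) K) (c : K)
    (h0 : actVar A 0 = X 0) (h1 : actVar A 1 = X 1)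
    (h : bind₁ (actVar A) cubicF = C c * cubicF) :
    A = matFor c (A 0 3) (A 0 4) := by
  have L : ∀ j : Fin 5, ∀ p : Fin 5 → K, eval p (actVar A j) = ∑ i, A i j * p i := by
    intro j p; simp [actVar]
  have F0 : ∀ p : Fin 5 → K, (∑ i, A i 0 * p i) = p 0 := by
    intro p; rw [← L 0 p, h0, eval_X]
  have F1 : ∀ p : Fin 5 → K, (∑ i, A i 1 * p i) = p 1 := by
    intro p; rw [← L 1 p, h1, eval_X]
  simp only [cubicF, map_add, map_mul, map_pow, bind₁_X_right, h0, h1] at h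
  have E : ∀ p : Fin 5 → K,
      p 0 ^ 2 * (∑ i, A i 2 * p i) + p 0 * p 1 * (∑ i, A i 3 * p i)
        + p 1 ^ 2 * (∑ i, A i 4 * p i)
      = c * (p 0 ^ 2 * p 2 + p 0 * p 1 * p 3 + p 1 ^ 2 * p 4) := by
    intro p
    have := congrArg (eval p) h
    simpa [actVar, cubicF, mul_comm] using this
  have G1 := F0 ![1,0,0,0,0]; have G2 := F0 ![0,1,0,0,0]
  have G3 := F0 ![0,0,1,0,0]; have G4 := F0 ![0,0,0,1,0]; have G5 := F0 ![0,0,0,0,1]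
  have H1 := F1 ![1,0,0,0,0]; have H2 := F1 ![0,1,0,0,0]
  have H3 := F1 ![0,0,1,0,0]; have H4 := F1 ![0,0,0,1,0]; have H5 := F1 ![0,0,0,0,1]
  have E1 := E ![1,0,0,0,0]; have E2 := E ![1,0,1,0,0]
  have E3 := E ![1,0,0,1,0]; have E4 := E ![1,0,0,0,1]
  have E5 := E ![0,1,0,0,0]; have E6 := E ![0,1,1,0,0]
  have E7 := E ![0,1,0,1,0]; have E8 := E ![0,1,0,0,1]
  have E9 := E ![1,1,0,0,0]; have E10 := E ![1,-1,0,0,0]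
  have E11 := E ![1,1,1,0,0]; have E12 := E ![1,1,0,1,0]; have E13 := E ![1,1,0,0,1]
  simp only [Fin.sum_univ_five, Matrix.cons_val] at G1 G2 G3 G4 G5 H1 H2 H3 H4 H5 E1 E2 E3 E4 E5 E6 E7 E8 E9 E10 E11 E12 E13
  norm_num [Fin.sum_univ_five] at G1 G2 G3 G4 G5 H1 H2 H3 H4 H5 E1 E2 E3 E4 E5 E6 E7 E8 E9 E10 E11 E12 E13
  have e22 : A 2 2 = c := by linear_combination E2 - E1
  have e32 : A 3 2 = 0 := by linear_combination E3 - E1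
  have e42 : A 4 2 = 0 := by linear_combination E4 - E1
  have e24 : A 2 4 = 0 := by linear_combination E6 - E5
  have e34 : A 3 4 = 0 := by linear_combination E7 - E5
  have e44 : A 4 4 = c := by linear_combination E8 - E5
  have e13 : A 1 3 = -A 0 4 := by linear_combination (E9 + E10) / 2 - E1
  have e12 : A 1 2 = -A 0 3 := by linear_combination (E9 - E10) / 2 - E5
  have e23 : A 2 3 = 0 := by linear_combination E11 - E9 - e22 - e24
  have e33 : A 3 3 = c := by linear_combination E12 - E9 - e32 - e34
  have e43 : A 4 3 = 0 := by linear_combination E13 - E9 - e42 - e44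
  ext i j
  fin_cases i <;> fin_cases j <;>
    simp [matFor, Matrix.vecHead, Matrix.vecTail,
      G1, G2, G3, G4, G5, H1, H2, H3, H4, H5, E1, E5,
      e22, e32, e42, e24, e34, e44, e13, e12, e23, e33, e43]

end Aux

/-- description of the substitutions fixing `t₀, t₁` and preserving
`F = t₀²t₂ + t₀t₁t₃ + t₁²t₄` up to a nonzero scalar: they are exactly those given by
triples `(w, α, β)` with `w ≠ 0`, and `(w, α, β) ↦ matFor w α β` is a group isomorphism
from `(w,α,β)·(w',α',β') = (ww', w'α+α', w'β+β')` onto this group of substitutions. -/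
theorem stmt_7 :
    (∀ A : GL (Fin 5) (AlgebraicClosure ℚ),
      actVar (A : Matrix (Fin 5) (Fin 5) (AlgebraicClosure ℚ)) 0 = X 0 →
      actVar (A : Matrix (Fin 5) (Fin 5) (AlgebraicClosure ℚ)) 1 = X 1 →
      ((∃ c : AlgebraicClosure ℚ, c ≠ 0 ∧
          bind₁ (actVar (A : Matrix (Fin 5) (Fin 5) (AlgebraicClosure ℚ))) cubicF =
            C c * cubicF) ↔
        (∃ w α β : AlgebraicClosure ℚ, w ≠ 0 ∧
          actVar (A : Matrix (Fin 5) (Fin 5) (AlgebraicClosure ℚ)) 2 =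
            C w * X 2 - C α * X 1 ∧
          actVar (A : Matrix (Fin 5) (Fin 5) (AlgebraicClosure ℚ)) 3 =
            C w * X 3 + C α * X 0 - C β * X 1 ∧
          actVar (A : Matrix (Fin 5) (Fin 5) (AlgebraicClosure ℚ)) 4 =
            C w * X 4 + C β * X 0))) ∧
    -- `matFor` lands in `GL₅` when `w ≠ 0`
    (∀ w α β : AlgebraicClosure ℚ, w ≠ 0 → IsUnit (matFor w α β)) ∧
    -- `matFor` sends the identity to the identity
    matFor 1 0 0 = 1 ∧
    -- `matFor` is a group homomorphism for the twisted product on `K* ⊕ K ⊕ K`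
    (∀ w α β w' α' β' : AlgebraicClosure ℚ,
      matFor w α β * matFor w' α' β' = matFor (w * w') (w' * α + α') (w' * β + β')) ∧
    -- `matFor` is injective
    (∀ w α β w' α' β' : AlgebraicClosure ℚ,
      matFor w α β = matFor w' α' β' → (w, α, β) = (w', α', β')) ∧
    -- `matFor` is onto the group of substitutions fixing `t₀, t₁` and preserving `F`
    -- up to a nonzero scalar
    (∀ A : GL (Fin 5) (AlgebraicClosure ℚ),
      ((actVar (A : Matrix (Fin 5) (Fin 5) (AlgebraicClosure ℚ)) 0 = X 0 ∧
        actVar (A : Matrix (Fin 5) (Fin 5) (AlgebraicClosure ℚ)) 1 = X 1 ∧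
        ∃ c : AlgebraicClosure ℚ, c ≠ 0 ∧
          bind₁ (actVar (A : Matrix (Fin 5) (Fin 5) (AlgebraicClosure ℚ))) cubicF =
            C c * cubicF) ↔
      (∃ w α β : AlgebraicClosure ℚ, w ≠ 0 ∧
        (A : Matrix (Fin 5) (Fin 5) (AlgebraicClosure ℚ)) = matFor w α β))) := by
  refine ⟨?_, ?_, matFor_one, matFor_mul, ?_, ?_⟩
  · -- part 1
    intro A h0 h1
    constructor
    · rintro ⟨c, hc, h⟩
      have hk := key _ c h0 h1 h
      obtain ⟨-, -, m2, m3, m4⟩ := actVar_matFor c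
        ((A : Matrix (Fin 5) (Fin 5) (AlgebraicClosure ℚ)) 0 3)
        ((A : Matrix (Fin 5) (Fin 5) (AlgebraicClosure ℚ)) 0 4)
      refine ⟨c, (A : Matrix (Fin 5) (Fin 5) (AlgebraicClosure ℚ)) 0 3,
        (A : Matrix (Fin 5) (Fin 5) (AlgebraicClosure ℚ)) 0 4, hc, ?_, ?_, ?_⟩ <;> rw [hk]
      · exact m2
      · exact m3
      · exact m4
    · rintro ⟨w, α, β, hw, h2, h3, h4⟩
      exact ⟨w, hw, bind_compute _ w α β h0 h1 h2 h3 h4⟩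
  · -- part 2
    intro w α β hw
    have e : matFor w α β * matFor w⁻¹ (-(w⁻¹ * α)) (-(w⁻¹ * β)) = 1 := by
      rw [matFor_mul, ← matFor_one]
      congr 1 <;> field_simp <;> ring
    exact ⟨⟨_, _, e, mul_eq_one_comm.mp e⟩, rfl⟩
  · -- part 5
    intro w α β w' α' β' h
    have h1 := congrFun (congrFun h 2) 2
    have h2 := congrFun (congrFun h 0) 3
    have h3 := congrFun (congrFun h 0) 4
    simp [matFor, Matrix.vecHead, Matrix.vecTail] at h1 h2 h3
    simp [h1, h2, h3]
  · -- part 6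
    intro A
    constructor
    · rintro ⟨h0, h1, c, hc, h⟩
      exact ⟨c, (A : Matrix (Fin 5) (Fin 5) (AlgebraicClosure ℚ)) 0 3,
        (A : Matrix (Fin 5) (Fin 5) (AlgebraicClosure ℚ)) 0 4, hc, key _ c h0 h1 h⟩
    · rintro ⟨w, α, β, hw, hA⟩
      obtain ⟨m0, m1, m2, m3, m4⟩ := actVar_matFor w α β
      rw [hA]
      exact ⟨m0, m1, w, hw, bind_compute _ w α β m0 m1 m2 m3 m4⟩
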